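/- Under the stated hypotheses, for every natural number j one has M_D(0, β+j) = M_D(0, j) · M_C(jτ, α). -/

import Mathlib

/-- The ordered product `D_j · D_{j+τ} ⋯ D_{j+(k-1)τ}`. -/
def chainProd {G : Type*} [Group G] (D : ℕ → G) (τ j k : ℕ) : G :=
  ((List.range k).map fun i => D (j + i * τ)).prod

section Aux

variable {G : Type*} [Group G]

lemma chainProd_succ (D : ℕ → G) (τ j k : ℕ) :
    chainProd D τ j (k+1) = chainProd D τ j k * D (j + k * τ) := by
  simp [chainProd, List.range_succ]

lemma chainProd_succ' (D : ℕ → G) (τ j k : ℕ) :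
    chainProd D τ j (k+1) = D j * chainProd D τ (j+τ) k := by
  unfold chainProd
  rw [List.range_succ_eq_map, List.map_cons, List.prod_cons, List.map_map]
  congr 1
  · simp
  · congr 1
    refine List.map_congr_left fun i _ => ?_
    simp only [Function.comp_apply]
    congr 1
    simp [Nat.succ_mul]
    ring

lemma pow_apply_seq (e : Monoid.End G) (D : ℕ → G) (hD : ∀ j, e (D j) = D (j+1)) :
    ∀ m j, (e ^ m) (D j) = D (j + m) := by
  intro m
  induction m with
  | zero => intro j; rfl
  | succ n ih =>
    intro j
    rw [pow_succ]
    show (e ^ n) (e (D j)) = _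
    rw [hD, ih, Nat.add_assoc, Nat.add_comm 1 n]

lemma pow_chainProd (e : Monoid.End G) (D : ℕ → G) (hD : ∀ j, e (D j) = D (j+1))
    (m τ j k : ℕ) :
    (e ^ m) (chainProd D τ j k) = chainProd D τ (j + m) k := by
  unfold chainProd
  rw [map_list_prod, List.map_map]
  congr 1
  refine List.map_congr_left fun i _ => ?_
  simp only [Function.comp_apply]
  rw [pow_apply_seq e D hD]
  congr 1
  ring

end Aux

theorem stmt_5 {G : Type*} [Group G] (φ : G →* G) (D C : ℕ → G)
    (hD : ∀ j, φ (D j) = D (j + 1)) (hC : ∀ j, φ (C j) = C (j + 1))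
    (β τ τc α : ℕ) (hβ : 2 ≤ β) (hτ : 0 < τ) (hτc : 0 < τc) (hα : 0 < α)
    (hcomp : α * τc = β * τ)
    (hbase : D ((β - 1) * τ) = (chainProd D τ 0 (β - 1))⁻¹ * chainProd C τc 0 α) :
    ∀ j : ℕ, chainProd D τ 0 (β + j) = chainProd D τ 0 j * chainProd C τc (j * τ) α := by
  obtain ⟨b, rfl⟩ : ∃ b, β = b + 2 := ⟨β - 2, by omega⟩
  rw [show b + 2 - 1 = b + 1 by omega] at hbase
  set e : Monoid.End G := φ with he
  have heD : ∀ j, e (D j) = D (j + 1) := hD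
  have heC : ∀ j, e (C j) = C (j + 1) := hC
  -- base case
  have base0 : chainProd D τ 0 (b + 2) = chainProd C τc 0 α := by
    rw [chainProd_succ, Nat.zero_add, hbase, mul_inv_cancel_left]
  -- shifted relation S(0)
  have S0 : chainProd C τc 0 α * D ((b + 2) * τ) = D 0 * chainProd C τc τ α := by
    have h1 : chainProd D τ 0 (b + 2) = D 0 * chainProd D τ τ (b + 1) := by
      rw [chainProd_succ', Nat.zero_add]
    have h2 : (e ^ τ) (chainProd D τ 0 (b + 2)) = (e ^ τ) (chainProd C τc 0 α) := by
      rw [base0]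
    rw [pow_chainProd e D heD, pow_chainProd e C heC] at h2
    simp only [Nat.zero_add] at h2
    have h3 : chainProd D τ τ (b + 2) = chainProd D τ τ (b + 1) * D ((b + 2) * τ) := by
      rw [chainProd_succ]
      congr 2
      ring
    rw [h3] at h2
    rw [← base0, h1, mul_assoc, h2]
  -- general shifted relation S(j)
  have S : ∀ j : ℕ, chainProd C τc (j * τ) α * D ((b + 2 + j) * τ)
      = D (j * τ) * chainProd C τc ((j + 1) * τ) α := by
    intro j
    have h := congrArg (e ^ (j * τ)) S0
    rw [map_mul, map_mul, pow_chainProd e C heC, pow_chainProd e C heC,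
      pow_apply_seq e D heD, pow_apply_seq e D heD] at h
    simp only [Nat.zero_add] at h
    have e1 : (b + 2) * τ + j * τ = (b + 2 + j) * τ := by ring
    have e2 : τ + j * τ = (j + 1) * τ := by ring
    rwa [e1, e2] at h
  intro j
  induction j with
  | zero => simpa [chainProd] using base0
  | succ n ih =>
    have h4 : b + 2 + (n + 1) = (b + 2 + n) + 1 := by omega
    rw [h4, chainProd_succ, ih, Nat.zero_add, mul_assoc, S n, chainProd_succ,
      Nat.zero_add, mul_assoc]
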